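/- Let I = {m, m+1, …, n} be a complete set of consecutive nonnegative integers with n > m. Then the minimum number of convex quadratic inequalities whose solution set is a convex set with facial dimension signature I equals ⌈log₂(n − m + 1)⌉. -/

import Mathlib

open Set Metric RealInnerProductSpace

variable {E : Type*} [NormedAddCommGroup E] [NormedSpace ℝ E]

/-- A face of a convex set: a convex subset `F` of `C` such that any open segment of `C`
meeting `F` has both endpoints in `F`. -/
def IsFace (C F : Set E) : Prop := Convex ℝ F ∧ IsExtreme ℝ C F

/-- Dimension of a convex set: the dimension of its affine hull. -/
noncomputable def sdim (S : Set E) : ℕ := Module.finrank ℝ (affineSpan ℝ S).direction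

/-- The facial dimension signature: the set of dimensions of nonempty faces. -/
def faceDimSig (C : Set E) : Set ℕ :=
  {d | ∃ F : Set E, IsFace C F ∧ F.Nonempty ∧ sdim F = d}

/-- The minimal face of `C` containing `x`. -/
def minFace (C : Set E) (x : E) : Set E := ⋂₀ {F | IsFace C F ∧ x ∈ F}

/-- `S` is the solution set of `k` convex quadratic inequalities. -/
def QuadRep {N : ℕ} (S : Set (EuclideanSpace ℝ (Fin N))) (k : ℕ) : Prop :=
  ∃ (Q : Fin k → (EuclideanSpace ℝ (Fin N) →ₗ[ℝ] EuclideanSpace ℝ (Fin N)))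
    (a : Fin k → EuclideanSpace ℝ (Fin N)) (α : Fin k → ℝ),
    (∀ j x, (0 : ℝ) ≤ ⟪Q j x, x⟫) ∧
    (∀ j x y, ⟪Q j x, y⟫ = ⟪x, Q j y⟫) ∧
    S = {x | ∀ j, ⟪Q j x, x⟫ + 2 * ⟪a j, x⟫ + α j ≤ 0}

open Module

set_option linter.unusedSectionVars false
set_option maxHeartbeats 1000000

section Quad
variable {E : Type*} [NormedAddCommGroup E] [InnerProductSpace ℝ E] [FiniteDimensional ℝ E]

/-- the quadratic function -/
def qf (Q : E →ₗ[ℝ] E) (a : E) (α : ℝ) (x : E) : ℝ := ⟪Q x, x⟫ + 2 * ⟪a, x⟫ + α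

variable {Q : E →ₗ[ℝ] E} {a : E} {α : ℝ}

lemma psd_ker (hs : ∀ x y, ⟪Q x, y⟫ = ⟪x, Q y⟫) (hp : ∀ x, (0:ℝ) ≤ ⟪Q x, x⟫)
    {v : E} (hv : ⟪Q v, v⟫ = 0) : Q v = 0 := by
  have key : ∀ w : E, ⟪Q v, w⟫ = 0 := by
    intro w
    by_contra hne
    -- consider t ↦ ⟪Q (v + t w), v + t w⟫ = 2 t ⟪Qv, w⟫ + t² ⟪Qw, w⟫ ≥ 0
    have hexp : ∀ t : ℝ, 0 ≤ 2 * t * ⟪Q v, w⟫ + t ^ 2 * ⟪Q w, w⟫ := by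
      intro t
      have h0 := hp (v + t • w)
      have : ⟪Q (v + t • w), v + t • w⟫
          = ⟪Q v, v⟫ + t * ⟪Q v, w⟫ + t * ⟪Q w, v⟫ + t ^ 2 * ⟪Q w, w⟫ := by
        simp [map_add, map_smul, inner_add_left, inner_add_right,
          real_inner_smul_left, real_inner_smul_right]
        ring
      rw [this, hv] at h0
      have hsw : ⟪Q w, v⟫ = ⟪Q v, w⟫ := by
        rw [hs w v, real_inner_comm]
      rw [hsw] at h0; nlinarith [h0]
    -- choose t small of opposite sign
    have hI : 0 < ⟪Q v, w⟫ ^ 2 :=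
      lt_of_le_of_ne (sq_nonneg _) (Ne.symm (pow_ne_zero 2 hne))
    rcases le_or_gt (⟪Q w, w⟫) 0 with hWW | hWW
    · have := hexp (-(⟪Q v, w⟫))
      nlinarith [hI]
    · have h5 := hexp (-(⟪Q v, w⟫) / ⟪Q w, w⟫)
      have h2 : (⟪Q w, w⟫) ≠ 0 := ne_of_gt hWW
      have key : 2 * (-(⟪Q v, w⟫) / ⟪Q w, w⟫) * ⟪Q v, w⟫
          + (-(⟪Q v, w⟫) / ⟪Q w, w⟫) ^ 2 * ⟪Q w, w⟫ = -(⟪Q v, w⟫ ^ 2) / ⟪Q w, w⟫ := by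
        field_simp; ring
      rw [key, neg_div] at h5
      have : 0 < ⟪Q v, w⟫ ^ 2 / ⟪Q w, w⟫ := div_pos hI hWW
      linarith
  have : ⟪Q v, Q v⟫ = 0 := key (Q v)
  exact inner_self_eq_zero.mp this

lemma qf_add_line (hs : ∀ x y, ⟪Q x, y⟫ = ⟪x, Q y⟫) (x u : E) (t : ℝ) :
    qf Q a α (x + t • u) = qf Q a α x + t * (2 * (⟪a, u⟫ + ⟪Q x, u⟫)) + t ^ 2 * ⟪Q u, u⟫ := by
  have hsw : ⟪Q u, x⟫ = ⟪Q x, u⟫ := by rw [hs u x, real_inner_comm]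
  simp only [qf, map_add, map_smul, inner_add_left, inner_add_right,
    real_inner_smul_left, real_inner_smul_right, hsw]
  ring

lemma qf_add_mem (hs : ∀ x y, ⟪Q x, y⟫ = ⟪x, Q y⟫) {v : E} (hv1 : Q v = 0) (hv2 : ⟪a, v⟫ = 0)
    (x : E) : qf Q a α (x + v) = qf Q a α x := by
  have := qf_add_line (Q := Q) (a := a) (α := α) hs x v 1
  simpa [hv1, hv2, hs x v] using this

/-- three point lemma -/
lemma three_point (hs : ∀ x y, ⟪Q x, y⟫ = ⟪x, Q y⟫) (hp : ∀ x, (0:ℝ) ≤ ⟪Q x, x⟫)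
    {x u : E} {θ : ℝ} (h0 : 0 < θ) (h1 : θ < 1)
    (ha : qf Q a α x = 0) (hb : qf Q a α (x + θ • u) = 0) (hc : qf Q a α (x + u) = 0) :
    Q u = 0 ∧ ⟪a, u⟫ = 0 := by
  have e1 := qf_add_line (Q := Q) (a := a) (α := α) hs x u θ
  have e2 := qf_add_line (Q := Q) (a := a) (α := α) hs x u 1
  rw [hb, ha] at e1
  rw [one_smul] at e2
  rw [hc, ha] at e2
  have hP : 0 < θ * (1 - θ) := mul_pos h0 (by linarith)
  have hQuu : ⟪Q u, u⟫ = 0 := by nlinarith [e1, e2, hP]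
  have hQu : Q u = 0 := psd_ker hs hp hQuu
  have hlin : ⟪a, u⟫ + ⟪Q x, u⟫ = 0 := by
    rw [hQuu] at e2; linarith [e2]
  have : ⟪Q x, u⟫ = 0 := by rw [hs x u, hQu, inner_zero_right]
  constructor
  · exact hQu
  · linarith [hlin, this]

lemma qf_convexOn (hs : ∀ x y, ⟪Q x, y⟫ = ⟪x, Q y⟫) (hp : ∀ x, (0:ℝ) ≤ ⟪Q x, x⟫) :
    ConvexOn ℝ univ (qf Q a α) := by
  refine ⟨convex_univ, fun x _ y _ b c hb hc hbc => ?_⟩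
  have key : qf Q a α (b • x + c • y)
      = b * qf Q a α x + c * qf Q a α y - b * c * ⟪Q (x - y), x - y⟫ := by
    have hsw : ⟪Q y, x⟫ = ⟪Q x, y⟫ := by rw [hs y x, real_inner_comm]
    simp only [qf, map_add, map_smul, map_sub, inner_add_left, inner_add_right,
      inner_sub_left, inner_sub_right, real_inner_smul_left, real_inner_smul_right, hsw]
    have hc' : c = 1 - b := by linarith
    subst hc'
    ring
  rw [key]
  simp only [smul_eq_mul]
  nlinarith [mul_nonneg hb hc, hp (x - y)]

end Quad

section Faces
variable {E : Type*} [NormedAddCommGroup E] [InnerProductSpace ℝ E] [FiniteDimensional ℝ E]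

/-- The lineality-type subspace of a quadratic inequality. -/
def Kspace (Q : E →ₗ[ℝ] E) (a : E) : Submodule ℝ E where
  carrier := {v | Q v = 0 ∧ ⟪a, v⟫ = 0}
  add_mem' := by
    rintro u v ⟨h1, h2⟩ ⟨h3, h4⟩
    exact ⟨by simp [map_add, h1, h3], by simp [inner_add_right, h2, h4]⟩
  zero_mem' := by simp
  smul_mem' := by
    rintro c v ⟨h1, h2⟩
    exact ⟨by simp [map_smul, h1], by simp [real_inner_smul_right, h2]⟩

@[simp] lemma mem_Kspace {Q : E →ₗ[ℝ] E} {a v : E} :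
    v ∈ Kspace Q a ↔ Q v = 0 ∧ ⟪a, v⟫ = 0 := Iff.rfl

variable {k : ℕ}

/-- Intersection of the K-spaces of constraints active at `x`. -/
def Vspace (QQ : Fin k → E →ₗ[ℝ] E) (aa : Fin k → E) (al : Fin k → ℝ) (x : E) : Submodule ℝ E :=
  ⨅ j, ⨅ (_ : qf (QQ j) (aa j) (al j) x = 0), Kspace (QQ j) (aa j)

lemma mem_Vspace {QQ : Fin k → E →ₗ[ℝ] E} {aa : Fin k → E} {al : Fin k → ℝ} {x v : E} :
    v ∈ Vspace QQ aa al x ↔ ∀ j, qf (QQ j) (aa j) (al j) x = 0 → v ∈ Kspace (QQ j) (aa j) := by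
  simp [Vspace, Submodule.mem_iInf]

/-- The solution set. -/
def Sset (QQ : Fin k → E →ₗ[ℝ] E) (aa : Fin k → E) (al : Fin k → ℝ) : Set E :=
  {x | ∀ j, qf (QQ j) (aa j) (al j) x ≤ 0}

lemma mem_Sset {QQ : Fin k → E →ₗ[ℝ] E} {aa : Fin k → E} {al : Fin k → ℝ} {x : E} :
    x ∈ Sset QQ aa al ↔ ∀ j, qf (QQ j) (aa j) (al j) x ≤ 0 := Iff.rfl

lemma sdim_eq_of_between {V : Submodule ℝ E} {x : E} {F : Set E} {ε : ℝ} (hε : 0 < ε)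
    (h1 : ∀ v ∈ V, ‖v‖ < ε → x + v ∈ F) (h2 : ∀ y ∈ F, y - x ∈ V) :
    sdim F = Module.finrank ℝ V := by
  have hd : (affineSpan ℝ F).direction = V := by
    rw [direction_affineSpan]
    apply le_antisymm
    · rw [vectorSpan_def]
      refine Submodule.span_le.mpr ?_
      rintro w hw
      rw [Set.mem_vsub] at hw
      obtain ⟨y, hy, z, hz, rfl⟩ := hw
      have hyz : y -ᵥ z = (y - x) - (z - x) := by rw [vsub_eq_sub]; abel
      rw [hyz]
      exact V.sub_mem (h2 y hy) (h2 z hz)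
    · intro v hv
      have h0F : x ∈ F := by simpa using h1 0 V.zero_mem (by simpa using hε)
      set c : ℝ := ε / (2 * (‖v‖ + 1)) with hc
      have hcpos : 0 < c := by positivity
      have hkey : c * (‖v‖ + 1) = ε / 2 := by
        rw [hc]; field_simp
      have hnorm : ‖c • v‖ < ε := by
        rw [norm_smul, Real.norm_eq_abs, abs_of_pos hcpos]
        nlinarith [norm_nonneg v]
      have hF : x + c • v ∈ F := h1 _ (V.smul_mem c hv) hnorm
      have hmem : (x + c • v) -ᵥ x ∈ vectorSpan ℝ F := vsub_mem_vectorSpan ℝ hF h0F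
      rw [vsub_eq_sub, add_sub_cancel_left] at hmem
      have := (vectorSpan ℝ F).smul_mem c⁻¹ hmem
      rwa [inv_smul_smul₀ (ne_of_gt hcpos)] at this
  unfold sdim
  rw [hd]

variable {QQ : Fin k → E →ₗ[ℝ] E} {aa : Fin k → E} {al : Fin k → ℝ}

lemma Sset_convex (hs : ∀ j x y, ⟪QQ j x, y⟫ = ⟪x, QQ j y⟫)
    (hp : ∀ j x, (0:ℝ) ≤ ⟪QQ j x, x⟫) : Convex ℝ (Sset QQ aa al) := by
  intro x hx y hy b c hb hc hbc
  intro j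
  have h := (qf_convexOn (Q := QQ j) (a := aa j) (α := al j) (hs j) (hp j)).2
    (mem_univ x) (mem_univ y) hb hc hbc
  simp only [smul_eq_mul] at h
  have h1 : b * qf (QQ j) (aa j) (al j) x ≤ 0 :=
    mul_nonpos_of_nonneg_of_nonpos hb (hx j)
  have h2 : c * qf (QQ j) (aa j) (al j) y ≤ 0 :=
    mul_nonpos_of_nonneg_of_nonpos hc (hy j)
  calc qf (QQ j) (aa j) (al j) (b • x + c • y) ≤ _ := h
  _ ≤ 0 := by linarith

lemma eps_lemma {x : E} (hx : x ∈ Sset QQ aa al) :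
    ∃ ε > 0, ∀ v : E, ‖v‖ < ε → ∀ j, qf (QQ j) (aa j) (al j) x ≠ 0 →
      qf (QQ j) (aa j) (al j) (x + v) < 0 := by
  have hcont : ∀ j, Continuous (fun v : E => qf (QQ j) (aa j) (al j) (x + v)) := by
    intro j
    unfold qf
    have hQ : Continuous (QQ j) := (QQ j).continuous_of_finiteDimensional
    have h1 : Continuous (fun v : E => x + v) := continuous_const.add continuous_id
    exact ((( hQ.comp h1).inner h1).add (continuous_const.mul (continuous_const.inner h1))).add
      continuous_const
  have hev : ∀ᶠ v in nhds (0 : E), ∀ j, qf (QQ j) (aa j) (al j) x ≠ 0 →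
      qf (QQ j) (aa j) (al j) (x + v) < 0 := by
    rw [Filter.eventually_all]
    intro j
    by_cases hj : qf (QQ j) (aa j) (al j) x = 0
    · exact Filter.Eventually.of_forall fun v h => absurd hj h
    · have hlt : qf (QQ j) (aa j) (al j) x < 0 := lt_of_le_of_ne (hx j) hj
      have hopen : IsOpen {v : E | qf (QQ j) (aa j) (al j) (x + v) < 0} :=
        isOpen_lt (hcont j) continuous_const
      have h0 : (0 : E) ∈ {v : E | qf (QQ j) (aa j) (al j) (x + v) < 0} := by
        simpa using hlt
      filter_upwards [hopen.mem_nhds h0] with v hv _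
      exact hv
  rw [Metric.eventually_nhds_iff] at hev
  obtain ⟨ε, hε, h⟩ := hev
  exact ⟨ε, hε, fun v hv => h (by simpa using hv)⟩

end Faces

section Faces2
variable {E : Type*} [NormedAddCommGroup E] [InnerProductSpace ℝ E] [FiniteDimensional ℝ E]
variable {k : ℕ} {QQ : Fin k → E →ₗ[ℝ] E} {aa : Fin k → E} {al : Fin k → ℝ}

lemma mem_sig_of_mem (hs : ∀ j x y, ⟪QQ j x, y⟫ = ⟪x, QQ j y⟫)
    (hp : ∀ j x, (0:ℝ) ≤ ⟪QQ j x, x⟫) {x : E} (hx : x ∈ Sset QQ aa al) :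
    Module.finrank ℝ (Vspace QQ aa al x) ∈ faceDimSig (Sset QQ aa al) := by
  obtain ⟨ε, hε, heps⟩ := eps_lemma (QQ := QQ) (aa := aa) (al := al) hx
  set V := Vspace QQ aa al x with hV
  set F : Set E := {y | y ∈ Sset QQ aa al ∧ y - x ∈ V} with hF
  have hFS : F ⊆ Sset QQ aa al := fun y hy => hy.1
  -- membership in S for x + v, v ∈ V small
  have hxv : ∀ v ∈ V, ‖v‖ < ε → x + v ∈ F := by
    intro v hv hvn
    constructor
    · intro j
      by_cases hj : qf (QQ j) (aa j) (al j) x = 0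
      · have hvK := (mem_Vspace.mp hv) j hj
        rw [qf_add_mem (hs j) hvK.1 hvK.2 x, hj]
      · exact le_of_lt (heps v hvn j hj)
    · simpa using hv
  -- convexity of F
  have hconv : Convex ℝ F := by
    intro y hy z hz b c hb hc hbc
    constructor
    · exact Sset_convex hs hp hy.1 hz.1 hb hc hbc
    · have hrw : b • y + c • z - x = b • (y - x) + c • (z - x) := by
        match_scalars <;> linarith
      rw [hrw]
      exact V.add_mem (V.smul_mem b hy.2) (V.smul_mem c hz.2)
  -- extremeness of F
  have hext : IsExtreme ℝ (Sset QQ aa al) F := by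
    refine ⟨hFS, ?_⟩
    rintro y hy z hz w hwF ⟨b, c, hb, hc, hbc, hw⟩
    -- for each active j, show q_j y = q_j z = 0 and z - y ∈ Kspace j
    have hkey : ∀ j, qf (QQ j) (aa j) (al j) x = 0 →
        qf (QQ j) (aa j) (al j) y = 0 ∧ qf (QQ j) (aa j) (al j) z = 0 ∧
          z - y ∈ Kspace (QQ j) (aa j) := by
      intro j hj
      have hvK := (mem_Vspace.mp hwF.2) j hj
      have hw0 : qf (QQ j) (aa j) (al j) w = 0 := by
        have : w = x + (w - x) := by abel
        rw [this, qf_add_mem (hs j) hvK.1 hvK.2 x, hj]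
      have hcx := (qf_convexOn (Q := QQ j) (a := aa j) (α := al j) (hs j) (hp j)).2
        (mem_univ y) (mem_univ z) (le_of_lt hb) (le_of_lt hc) hbc
      rw [hw] at hcx
      simp only [smul_eq_mul] at hcx
      rw [hw0] at hcx
      have hy0 : qf (QQ j) (aa j) (al j) y = 0 := by
        nlinarith [hy j, hz j, mul_nonpos_of_nonneg_of_nonpos (le_of_lt hb) (hy j),
          mul_nonpos_of_nonneg_of_nonpos (le_of_lt hc) (hz j)]
      have hz0 : qf (QQ j) (aa j) (al j) z = 0 := by
        nlinarith [hy j, hz j, mul_nonpos_of_nonneg_of_nonpos (le_of_lt hb) (hy j),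
          mul_nonpos_of_nonneg_of_nonpos (le_of_lt hc) (hz j)]
      have hwy : w = y + c • (z - y) := by
        rw [← hw, smul_sub]
        rw [show b • y + c • z = (b + c) • y + (c • z - c • y) by rw [add_smul]; abel]
        rw [hbc, one_smul]
      have hc1 : c < 1 := by linarith
      have h3 := three_point (Q := QQ j) (a := aa j) (α := al j) (hs j) (hp j) hc hc1
        hy0 (by rw [← hwy]; exact hw0) (by rw [show y + (z - y) = z by abel]; exact hz0)
      exact ⟨hy0, hz0, h3⟩
    have huV : z - y ∈ V := by
      rw [mem_Vspace]
      intro j hj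
      exact (hkey j hj).2.2
    have hyV : y - x ∈ V := by
      have : y - x = (w - x) - c • (z - y) := by
        rw [← hw]
        match_scalars <;> linarith
      rw [this]
      exact V.sub_mem hwF.2 (V.smul_mem c huV)
    have hzV : z - x ∈ V := by
      have : z - x = (y - x) + (z - y) := by abel
      rw [this]
      exact V.add_mem hyV huV
    exact ⟨hy, hyV⟩
  refine ⟨F, ⟨hconv, hext⟩, ⟨x, ⟨hx, by simp⟩⟩, ?_⟩
  exact sdim_eq_of_between hε hxv (fun y hy => hy.2)

end Faces2

section Faces3
variable {E : Type*} [NormedAddCommGroup E] [InnerProductSpace ℝ E] [FiniteDimensional ℝ E]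
variable {k : ℕ} {QQ : Fin k → E →ₗ[ℝ] E} {aa : Fin k → E} {al : Fin k → ℝ}

lemma exists_point_of_sig (hs : ∀ j x y, ⟪QQ j x, y⟫ = ⟪x, QQ j y⟫)
    (hp : ∀ j x, (0:ℝ) ≤ ⟪QQ j x, x⟫) {d : ℕ} (hd : d ∈ faceDimSig (Sset QQ aa al)) :
    ∃ x ∈ Sset QQ aa al, Module.finrank ℝ (Vspace QQ aa al x) = d := by
  obtain ⟨F, ⟨hconv, hext⟩, ⟨y₀, hy₀⟩, hdim⟩ := hd
  have hFS := hext.1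
  have hych : ∀ j : Fin k, ∃ y, y ∈ F ∧
      (¬(∀ z ∈ F, qf (QQ j) (aa j) (al j) z = 0) → qf (QQ j) (aa j) (al j) y < 0) := by
    intro j
    by_cases hj : ∀ z ∈ F, qf (QQ j) (aa j) (al j) z = 0
    · exact ⟨y₀, hy₀, fun h => absurd hj h⟩
    · push_neg at hj
      obtain ⟨z, hzF, hz⟩ := hj
      exact ⟨z, hzF, fun _ => lt_of_le_of_ne (hFS hzF j) hz⟩
  choose y hyF hylt using hych
  set z : Fin (k+1) → E := Fin.cons y₀ y with hz
  have hzF : ∀ i, z i ∈ F := by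
    intro i
    refine Fin.cases ?_ ?_ i
    · simpa [hz] using hy₀
    · intro i'; simpa [hz] using hyF i'
  set w : ℝ := 1 / (k+1) with hwdef
  have hwpos : 0 < w := by positivity
  have hsum : ∑ _i : Fin (k+1), w = 1 := by
    rw [Finset.sum_const, Finset.card_univ, Fintype.card_fin, hwdef]
    rw [nsmul_eq_mul]; push_cast; field_simp
  set x : E := ∑ i : Fin (k+1), w • z i with hxdef
  have hxF : x ∈ F := hconv.sum_mem (fun i _ => hwpos.le) hsum (fun i _ => hzF i)
  have hxS : x ∈ Sset QQ aa al := hFS hxF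
  have hact : ∀ j, qf (QQ j) (aa j) (al j) x = 0 ↔
      ∀ z' ∈ F, qf (QQ j) (aa j) (al j) z' = 0 := by
    intro j
    constructor
    · intro h0
      by_contra hno
      have hj := (qf_convexOn (Q := QQ j) (a := aa j) (α := al j) (hs j) (hp j)).map_sum_le
        (fun (i : Fin (k+1)) _ => hwpos.le) hsum (fun i _ => mem_univ (z i))
      have hlt : ∑ i : Fin (k+1), w • qf (QQ j) (aa j) (al j) (z i)
          < ∑ _i : Fin (k+1), (0:ℝ) := by
        refine Finset.sum_lt_sum (fun i _ => ?_) ⟨Fin.succ j, Finset.mem_univ _, ?_⟩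
        · simpa [smul_eq_mul] using
            mul_nonpos_of_nonneg_of_nonpos hwpos.le (hFS (hzF i) j)
        · have hyj : z (Fin.succ j) = y j := by simp [hz]
          rw [hyj]
          simpa [smul_eq_mul] using mul_neg_of_pos_of_neg hwpos (hylt j hno)
      rw [Finset.sum_const, smul_zero] at hlt
      rw [← hxdef] at hj
      rw [h0] at hj
      linarith
    · intro hall
      exact hall x hxF
  obtain ⟨ε, hε, heps⟩ := eps_lemma hxS
  have h1 : ∀ v ∈ Vspace QQ aa al x, ‖v‖ < ε → x + v ∈ F := by
    intro v hv hvn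
    have hmem : ∀ (s : ℝ), s = 1 ∨ s = -1 → x + s • v ∈ Sset QQ aa al := by
      intro s hs1 j
      by_cases hj : qf (QQ j) (aa j) (al j) x = 0
      · have hvK := (mem_Vspace.mp hv) j hj
        have hsK : QQ j (s • v) = 0 ∧ ⟪aa j, s • v⟫ = 0 := by
          constructor
          · rw [map_smul, hvK.1, smul_zero]
          · rw [real_inner_smul_right, hvK.2, mul_zero]
        rw [qf_add_mem (hs j) hsK.1 hsK.2 x, hj]
      · refine le_of_lt (heps (s • v) ?_ j hj)
        have : ‖s • v‖ = ‖v‖ := by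
          rcases hs1 with h | h <;> simp [h, norm_smul]
        rw [this]; exact hvn
    have hS1 : x - v ∈ Sset QQ aa al := by
      have := hmem (-1) (Or.inr rfl)
      simpa [sub_eq_add_neg] using this
    have hS2 : x + v ∈ Sset QQ aa al := by simpa using hmem 1 (Or.inl rfl)
    have hseg : x ∈ openSegment ℝ (x - v) (x + v) := by
      refine ⟨1/2, 1/2, by norm_num, by norm_num, by norm_num, ?_⟩
      match_scalars <;> ring
    exact hext.right_mem_of_mem_openSegment hS1 hS2 hxF hseg
  have h2 : ∀ yy ∈ F, yy - x ∈ Vspace QQ aa al x := by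
    intro yy hyy
    rw [mem_Vspace]
    intro j hj
    have hall := (hact j).1 hj
    have hmid : (1/2 : ℝ) • x + (1/2 : ℝ) • yy ∈ F :=
      hconv hxF hyy (by norm_num) (by norm_num) (by norm_num)
    have h3 := three_point (Q := QQ j) (a := aa j) (α := al j) (hs j) (hp j)
      (θ := 1/2) (x := x) (u := yy - x) (by norm_num) (by norm_num)
      (hall x hxF) ?_ ?_
    · exact h3
    · have : x + (1/2 : ℝ) • (yy - x) = (1/2 : ℝ) • x + (1/2 : ℝ) • yy := by
        match_scalars <;> ring
      rw [this]
      exact hall _ hmid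
    · rw [show x + (yy - x) = yy by abel]
      exact hall yy hyy
  refine ⟨x, hxS, ?_⟩
  rw [← sdim_eq_of_between hε h1 h2, hdim]

end Faces3

section Comb

lemma finrank_finset_inf_bound {E : Type*} [NormedAddCommGroup E] [InnerProductSpace ℝ E]
    [FiniteDimensional ℝ E] {k : ℕ} {K' : Fin k → Submodule ℝ E} {L : Submodule ℝ E}
    (h : ∀ j, K' j ≤ L) (T : Finset (Fin k)) (hT : T.Nonempty) :
    ∑ j ∈ T, Module.finrank ℝ (K' j) ≤
      Module.finrank ℝ ↥(T.inf K') + (T.card - 1) * Module.finrank ℝ L := by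
  induction hT using Finset.Nonempty.cons_induction with
  | singleton a =>
    rw [Finset.sum_singleton, Finset.inf_singleton, Finset.card_singleton]
    simp
  | cons a T ha hT IH =>
    have hTL : T.inf K' ≤ L := by
      obtain ⟨j, hj⟩ := hT
      exact le_trans (Finset.inf_le hj) (h j)
    have hsup : Module.finrank ℝ ↥(K' a ⊔ T.inf K') ≤ Module.finrank ℝ L :=
      Submodule.finrank_mono (sup_le (h a) hTL)
    have hie := Submodule.finrank_sup_add_finrank_inf_eq (K' a) (T.inf K')
    rw [Finset.sum_cons, Finset.inf_cons, Finset.card_cons]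
    have hc1 : 1 ≤ T.card := Finset.card_pos.mpr hT
    have : Module.finrank ℝ (K' a) + Module.finrank ℝ ↥(T.inf K') ≤
        Module.finrank ℝ ↥(K' a ⊓ T.inf K') + Module.finrank ℝ L := by omega
    have e1 : T.card + 1 - 1 = (T.card - 1) + 1 := by omega
    rw [e1, add_mul, one_mul]
    omega

lemma comb_lemma {k m n : ℕ} (hmn : m < n) (c : Fin k → ℕ)
    (hcov : ∀ d, m ≤ d → d < n → ∃ T : Finset (Fin k),
      (∀ i ∈ T, c i ≤ n - d) ∧ n - d ≤ ∑ i ∈ T, c i) :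
    n - m ≤ 2 ^ k - 1 := by
  by_contra hcon
  have hcontra : 2 ^ k ≤ n - m := by
    have : 0 < 2 ^ k := by positivity
    omega
  set σ := Tuple.sort c with hσ
  set c' : Fin k → ℕ := c ∘ σ with hc'
  have hmono : Monotone c' := Tuple.monotone_sort c
  -- transfer covering to sorted version
  have hcov' : ∀ d, m ≤ d → d < n → ∃ T : Finset (Fin k),
      (∀ i ∈ T, c' i ≤ n - d) ∧ n - d ≤ ∑ i ∈ T, c' i := by
    intro d h1 h2
    obtain ⟨T, hT1, hT2⟩ := hcov d h1 h2
    refine ⟨T.image σ.symm, ?_, ?_⟩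
    · intro i hi
      rw [Finset.mem_image] at hi
      obtain ⟨i', hi', rfl⟩ := hi
      simpa [hc'] using hT1 i' hi'
    · rw [Finset.sum_image (fun a _ b _ hab => σ.symm.injective hab)]
      simpa [hc'] using hT2
  set cc : ℕ → ℕ := fun i => if h : i < k then c' ⟨i, h⟩ else 0 with hcc
  set sig : ℕ → ℕ := fun j => ∑ i ∈ Finset.range j, cc i with hsig
  have hclaim : ∀ j, j ≤ k → sig j ≤ 2 ^ j - 1 := by
    intro j
    induction j with
    | zero => intro _; simp [hsig]
    | succ j IH =>
      intro hjk
      have hj : j < k := hjk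
      have hIH : sig j ≤ 2 ^ j - 1 := IH (le_of_lt hj)
      have hpow : (1:ℕ) ≤ 2 ^ j := Nat.one_le_two_pow
      have hpk : 2 ^ j ≤ 2 ^ k := Nat.pow_le_pow_right (by norm_num) (le_of_lt hj)
      have hd1 : m ≤ n - sig j - 1 := by omega
      have hd2 : n - sig j - 1 < n := by omega
      obtain ⟨T, hT1, hT2⟩ := hcov' (n - sig j - 1) hd1 hd2
      have hnd : n - (n - sig j - 1) = sig j + 1 := by omega
      rw [hnd] at hT1 hT2
      -- some element of T has index ≥ j
      have hex : ∃ i ∈ T, j ≤ (i : ℕ) := by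
        by_contra hno
        push_neg at hno
        have hsub : T.image Fin.val ⊆ Finset.range j := by
          intro i hi
          rw [Finset.mem_image] at hi
          obtain ⟨i', hi', rfl⟩ := hi
          exact Finset.mem_range.mpr (hno i' hi')
        have heq : ∑ i ∈ T, c' i = ∑ i ∈ T.image Fin.val, cc i := by
          rw [Finset.sum_image (fun a _ b _ hab => Fin.val_injective hab)]
          refine Finset.sum_congr rfl fun i _ => ?_
          simp [hcc]
        have hle : ∑ i ∈ T.image Fin.val, cc i ≤ sig j :=
          Finset.sum_le_sum_of_subset hsub
        omega
      obtain ⟨i, hiT, hij⟩ := hex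
      have hcj : c' ⟨j, hj⟩ ≤ sig j + 1 :=
        le_trans (hmono (show (⟨j, hj⟩ : Fin k) ≤ i from hij)) (hT1 i hiT)
      have hstep : sig (j+1) = sig j + c' ⟨j, hj⟩ := by
        rw [hsig]
        simp only []
        rw [Finset.sum_range_succ]
        congr 1
        simp [hcc, hj]
      rw [hstep]
      have : 2 ^ (j+1) = 2 ^ j + 2 ^ j := by ring
      omega
  have hfin := hclaim k le_rfl
  obtain ⟨T, hT1, hT2⟩ := hcov' m (le_refl m) hmn
  have huniv : ∑ i ∈ T, c' i ≤ sig k := by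
    have h1 : ∑ i ∈ T, c' i ≤ ∑ i : Fin k, c' i :=
      Finset.sum_le_sum_of_subset (Finset.subset_univ T)
    have h2 : ∑ i : Fin k, c' i = sig k := by
      rw [hsig]
      simp only []
      rw [← Fin.sum_univ_eq_sum_range]
      refine Finset.sum_congr rfl fun i _ => ?_
      simp [hcc, i.isLt]
    omega
  omega

end Comb

section Lower
variable {E : Type*} [NormedAddCommGroup E] [InnerProductSpace ℝ E] [FiniteDimensional ℝ E]
variable {k : ℕ} {QQ : Fin k → E →ₗ[ℝ] E} {aa : Fin k → E} {al : Fin k → ℝ}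

lemma Vspace_le_vectorSpan (hs : ∀ j x y, ⟪QQ j x, y⟫ = ⟪x, QQ j y⟫)
    {x : E} (hx : x ∈ Sset QQ aa al) :
    Vspace QQ aa al x ≤ vectorSpan ℝ (Sset QQ aa al) := by
  intro v hv
  obtain ⟨ε, hε, heps⟩ := eps_lemma (QQ := QQ) (aa := aa) (al := al) hx
  set c : ℝ := ε / (2 * (‖v‖ + 1)) with hc
  have hcpos : 0 < c := by positivity
  have hkey : c * (‖v‖ + 1) = ε / 2 := by rw [hc]; field_simp
  have hnorm : ‖c • v‖ < ε := by
    rw [norm_smul, Real.norm_eq_abs, abs_of_pos hcpos]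
    nlinarith [norm_nonneg v]
  have hcv : c • v ∈ Vspace QQ aa al x := (Vspace QQ aa al x).smul_mem c hv
  have hmemS : x + c • v ∈ Sset QQ aa al := by
    intro j
    by_cases hj : qf (QQ j) (aa j) (al j) x = 0
    · have hvK := (mem_Vspace.mp hcv) j hj
      rw [qf_add_mem (hs j) hvK.1 hvK.2 x, hj]
    · exact le_of_lt (heps (c • v) hnorm j hj)
  have hmem : (x + c • v) -ᵥ x ∈ vectorSpan ℝ (Sset QQ aa al) :=
    vsub_mem_vectorSpan ℝ hmemS hx
  rw [vsub_eq_sub, add_sub_cancel_left] at hmem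
  have := (vectorSpan ℝ (Sset QQ aa al)).smul_mem c⁻¹ hmem
  rwa [inv_smul_smul₀ (ne_of_gt hcpos)] at this

lemma lower_bound_aux {m n : ℕ} (hmn : m < n)
    (hp : ∀ j x, (0:ℝ) ≤ ⟪QQ j x, x⟫) (hs : ∀ j x y, ⟪QQ j x, y⟫ = ⟪x, QQ j y⟫)
    (hconv : Convex ℝ (Sset QQ aa al))
    (hsig : faceDimSig (Sset QQ aa al) = Set.Icc m n) :
    n - m + 1 ≤ 2 ^ k := by
  classical
  set S := Sset QQ aa al with hSdef
  set L := vectorSpan ℝ S with hLdef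
  -- sdim S = n
  have hSface : sdim S ∈ faceDimSig S := by
    have hmem : m ∈ faceDimSig S := by rw [hsig]; exact ⟨le_refl m, le_of_lt hmn⟩
    obtain ⟨F, hF, ⟨x₀, hx₀⟩, _⟩ := hmem
    exact ⟨S, ⟨hconv, IsExtreme.rfl⟩, ⟨x₀, hF.2.1 hx₀⟩, rfl⟩
  have hsdimS : sdim S ≤ n := by
    rw [hsig] at hSface; exact hSface.2
  have hnmem : (n : ℕ) ∈ faceDimSig S := by rw [hsig]; exact ⟨le_of_lt hmn, le_refl n⟩
  have hnle : n ≤ sdim S := by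
    obtain ⟨F, hF, hne, hd⟩ := hnmem
    have h1 : vectorSpan ℝ F ≤ vectorSpan ℝ S := vectorSpan_mono ℝ hF.2.1
    have := Submodule.finrank_mono h1
    unfold sdim at hd hsdimS ⊢
    rw [direction_affineSpan] at hd
    rw [direction_affineSpan]
    omega
  have hLrank : Module.finrank ℝ L = n := by
    have : sdim S = n := le_antisymm hsdimS (by
      unfold sdim; unfold sdim at hnle; exact hnle)
    unfold sdim at this
    rw [direction_affineSpan] at this
    exact this
  -- the subspaces
  set K' : Fin k → Submodule ℝ E := fun j => Kspace (QQ j) (aa j) ⊓ L with hK'def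
  have hK'L : ∀ j, K' j ≤ L := fun j => inf_le_right
  have heK : ∀ j, Module.finrank ℝ (K' j) ≤ n := by
    intro j
    rw [← hLrank]
    exact Submodule.finrank_mono (hK'L j)
  -- covering hypothesis
  have hcov : ∀ d, m ≤ d → d < n → ∃ T : Finset (Fin k),
      (∀ i ∈ T, (n - Module.finrank ℝ (K' i)) ≤ n - d) ∧
        n - d ≤ ∑ i ∈ T, (n - Module.finrank ℝ (K' i)) := by
    intro d hd1 hd2
    have hdmem : d ∈ faceDimSig S := by rw [hsig]; exact ⟨hd1, le_of_lt hd2⟩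
    obtain ⟨x, hxS, hxd⟩ := exists_point_of_sig hs hp hdmem
    set T : Finset (Fin k) :=
      Finset.univ.filter (fun j => qf (QQ j) (aa j) (al j) x = 0) with hTdef
    have hmemT : ∀ j, j ∈ T ↔ qf (QQ j) (aa j) (al j) x = 0 := by
      intro j; simp [hTdef]
    have hVL : Vspace QQ aa al x ≤ L := Vspace_le_vectorSpan hs hxS
    have hTne : T.Nonempty := by
      rw [Finset.nonempty_iff_ne_empty]
      intro hTe
      have hVtop : Vspace QQ aa al x = ⊤ := by
        rw [eq_top_iff]
        intro v _
        rw [mem_Vspace]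
        intro j hj
        have : j ∈ T := (hmemT j).mpr hj
        rw [hTe] at this
        exact absurd this (Finset.notMem_empty j)
      have hNle : Module.finrank ℝ (Vspace QQ aa al x) ≤ Module.finrank ℝ E :=
        Submodule.finrank_le _
      have hLle : Module.finrank ℝ L ≤ Module.finrank ℝ E := Submodule.finrank_le _
      rw [hVtop, finrank_top] at hxd
      omega
    -- T.inf K' = V x
    have hinfV : T.inf K' = Vspace QQ aa al x := by
      apply le_antisymm
      · intro v hv
        rw [Submodule.mem_finsetInf] at hv
        rw [mem_Vspace]
        intro j hj
        exact (hv j ((hmemT j).mpr hj)).1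
      · intro v hv
        rw [Submodule.mem_finsetInf]
        intro j hj
        exact ⟨(mem_Vspace.mp hv) j ((hmemT j).mp hj), hVL hv⟩
    have hdle : ∀ i ∈ T, d ≤ Module.finrank ℝ (K' i) := by
      intro i hi
      rw [← hxd]
      apply Submodule.finrank_mono
      intro v hv
      exact ⟨(mem_Vspace.mp hv) i ((hmemT i).mp hi), hVL hv⟩
    have hsumb := finrank_finset_inf_bound hK'L T hTne
    rw [hinfV, hxd, hLrank] at hsumb
    refine ⟨T, fun i hi => by have := hdle i hi; have := heK i; omega, ?_⟩
    -- turn the sum bound around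
    have hsplit : ∑ i ∈ T, (n - Module.finrank ℝ (K' i))
        + ∑ i ∈ T, Module.finrank ℝ (K' i) = T.card * n := by
      rw [← Finset.sum_add_distrib]
      rw [Finset.sum_congr rfl (fun i _ => by have := heK i; omega : 
        ∀ i ∈ T, n - Module.finrank ℝ (K' i) + Module.finrank ℝ (K' i) = n)]
      rw [Finset.sum_const, smul_eq_mul]
    have hcard : 1 ≤ T.card := Finset.card_pos.mpr hTne
    have hc5 : T.card * n = (T.card - 1) * n + n := by
      obtain ⟨t, ht⟩ : ∃ t, T.card = t + 1 := ⟨T.card - 1, by omega⟩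
      rw [ht]; simp [add_mul]
    omega
  have hcomb := comb_lemma hmn (fun i => n - Module.finrank ℝ (K' i)) hcov
  have : 0 < 2 ^ k := by positivity
  omega

end Lower

section Construct
variable {N : ℕ}

/-- Diagonal 0/1 projection operator. -/
def diagProj (p : Fin N → Prop) [DecidablePred p] :
    EuclideanSpace ℝ (Fin N) →ₗ[ℝ] EuclideanSpace ℝ (Fin N) where
  toFun x := WithLp.toLp 2 (fun i => if p i then x i else 0)
  map_add' x y := by ext i; by_cases h : p i <;> simp [h]
  map_smul' c x := by ext i; by_cases h : p i <;> simp [h]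

lemma diagProj_apply (p : Fin N → Prop) [DecidablePred p] (x : EuclideanSpace ℝ (Fin N))
    (i : Fin N) : diagProj p x i = if p i then x i else 0 := rfl

lemma inner_diagProj_left (p : Fin N → Prop) [DecidablePred p] (x y : EuclideanSpace ℝ (Fin N)) :
    ⟪diagProj p x, y⟫ = ∑ i, if p i then x i * y i else 0 := by
  rw [PiLp.inner_apply]
  refine Finset.sum_congr rfl fun i _ => ?_
  rw [diagProj_apply]
  by_cases h : p i <;> simp [h, mul_comm]

lemma diagProj_symm (p : Fin N → Prop) [DecidablePred p] (x y : EuclideanSpace ℝ (Fin N)) :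
    ⟪diagProj p x, y⟫ = ⟪x, diagProj p y⟫ := by
  rw [inner_diagProj_left, real_inner_comm, inner_diagProj_left]
  refine Finset.sum_congr rfl fun i _ => ?_
  by_cases h : p i <;> simp [h, mul_comm]

lemma diagProj_psd (p : Fin N → Prop) [DecidablePred p] (x : EuclideanSpace ℝ (Fin N)) :
    0 ≤ ⟪diagProj p x, x⟫ := by
  rw [inner_diagProj_left]
  refine Finset.sum_nonneg fun i _ => ?_
  by_cases h : p i <;> simp [h, mul_self_nonneg]

lemma diagProj_eq_zero_iff (p : Fin N → Prop) [DecidablePred p] (v : EuclideanSpace ℝ (Fin N)) :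
    diagProj p v = 0 ↔ ∀ i, p i → v i = 0 := by
  constructor
  · intro h i hi
    have := congrArg (fun w : EuclideanSpace ℝ (Fin N) => w i) h
    simpa [diagProj_apply, hi] using this
  · intro h
    ext i
    rw [diagProj_apply]
    by_cases hi : p i
    · simp [hi, h i hi]
    · simp [hi]

/-- Coordinate subspace: vectors vanishing on `P`. -/
def ZP (P : Fin N → Prop) [DecidablePred P] : Submodule ℝ (EuclideanSpace ℝ (Fin N)) where
  carrier := {v | ∀ i, P i → v i = 0}
  add_mem' := by
    intro a b ha hb i hi
    have : (a + b) i = a i + b i := rfl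
    rw [this, ha i hi, hb i hi, add_zero]
  zero_mem' := fun i _ => rfl
  smul_mem' := by
    intro c v hv i hi
    have : (c • v) i = c * v i := rfl
    rw [this, hv i hi, mul_zero]

@[simp] lemma mem_ZP {P : Fin N → Prop} [DecidablePred P] {v : EuclideanSpace ℝ (Fin N)} :
    v ∈ ZP P ↔ ∀ i, P i → v i = 0 := Iff.rfl

lemma finrank_ZP (P : Fin N → Prop) [DecidablePred P] :
    Module.finrank ℝ (ZP P) = N - (Finset.univ.filter P).card := by
  classical
  let proj : EuclideanSpace ℝ (Fin N) →ₗ[ℝ] ({i // P i} → ℝ) :=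
    { toFun := fun v s => v s.1,
      map_add' := fun x y => rfl,
      map_smul' := fun c x => rfl }
  have hker : LinearMap.ker proj = ZP P := by
    ext v
    simp only [LinearMap.mem_ker, mem_ZP]
    constructor
    · intro h i hi
      exact congrFun h ⟨i, hi⟩
    · intro h
      funext s
      exact h s.1 s.2
  have hsurj : Function.Surjective proj := by
    intro u
    refine ⟨(WithLp.toLp 2 (fun i => if h : P i then u ⟨i, h⟩ else 0) : EuclideanSpace ℝ (Fin N)), ?_⟩
    funext s
    simp [proj, s.2]
    exact dif_pos s.2
  have hrn := LinearMap.finrank_range_add_finrank_ker proj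
  rw [hker, LinearMap.range_eq_top.mpr hsurj, finrank_top] at hrn
  have h1 : Module.finrank ℝ ({i // P i} → ℝ) = Fintype.card {i // P i} := Module.finrank_pi ℝ
  have heta : Fintype.card {i // P i} = (Finset.univ.filter P).card := by
    rw [Fintype.card_subtype]
  have h2 : Module.finrank ℝ (EuclideanSpace ℝ (Fin N)) = N := finrank_euclideanSpace_fin
  rw [h1, heta, h2] at hrn
  have hcard : (Finset.univ.filter P).card ≤ N := by
    calc (Finset.univ.filter P).card ≤ (Finset.univ : Finset (Fin N)).card :=
      Finset.card_le_card (Finset.filter_subset _ _)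
    _ = N := by simp
  omega

end Construct

section Count

lemma card_blocks {N k : ℕ} (σ : ℕ → ℕ) (hmono : Monotone σ)
    (hN : ∀ j : Fin k, σ (j.val + 1) ≤ N) (T : Finset (Fin k)) :
    (Finset.univ.filter
      (fun i : Fin N => ∃ j ∈ T, σ j.val ≤ i.val ∧ i.val < σ (j.val + 1))).card
      = ∑ j ∈ T, (σ (j.val + 1) - σ j.val) := by
  classical
  set UU : Finset ℕ := T.biUnion (fun j => Finset.Ico (σ j.val) (σ (j.val + 1))) with hUU
  have hdisj : ∀ x ∈ T, ∀ y ∈ T, x ≠ y →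
      Disjoint (Finset.Ico (σ x.val) (σ (x.val + 1))) (Finset.Ico (σ y.val) (σ (y.val + 1))) := by
    intro x _ y _ hxy
    have hvne : x.val ≠ y.val := fun h => hxy (Fin.ext h)
    rw [Finset.disjoint_left]
    intro a ha ha'
    rw [Finset.mem_Ico] at ha ha'
    rcases lt_or_gt_of_ne hvne with h | h
    · have : σ (x.val + 1) ≤ σ y.val := hmono h
      omega
    · have : σ (y.val + 1) ≤ σ x.val := hmono h
      omega
  have hcardUU : UU.card = ∑ j ∈ T, (σ (j.val + 1) - σ j.val) := by
    rw [hUU, Finset.card_biUnion hdisj]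
    exact Finset.sum_congr rfl fun j _ => Nat.card_Ico _ _
  rw [← hcardUU]
  refine Finset.card_bij' (fun i _ => i.val) (fun u hu => ⟨u, ?_⟩) ?_ ?_ ?_ ?_
  · -- u < N
    rw [hUU, Finset.mem_biUnion] at hu
    obtain ⟨j, hjT, hj⟩ := hu
    rw [Finset.mem_Ico] at hj
    exact lt_of_lt_of_le hj.2 (hN j)
  · intro i hi
    rw [Finset.mem_filter] at hi
    obtain ⟨-, j, hjT, hj⟩ := hi
    rw [hUU, Finset.mem_biUnion]
    exact ⟨j, hjT, Finset.mem_Ico.mpr hj⟩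
  · intro u hu
    rw [Finset.mem_filter]
    refine ⟨Finset.mem_univ _, ?_⟩
    rw [hUU, Finset.mem_biUnion] at hu
    obtain ⟨j, hjT, hj⟩ := hu
    rw [Finset.mem_Ico] at hj
    exact ⟨j, hjT, hj⟩
  · intro i _; rfl
  · intro u _; rfl

end Count

section Upper

theorem upper_exists (m n : ℕ) (hmn : m < n) :
    ∃ S : Set (EuclideanSpace ℝ (Fin n)), Convex ℝ S ∧
      QuadRep S (Nat.clog 2 (n - m + 1)) ∧ faceDimSig S = Set.Icc m n := by
  classical
  set g := n - m with hg
  have hg1 : 1 ≤ g := by omega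
  have hgn : g ≤ n := by omega
  set k := Nat.clog 2 (g + 1) with hk
  have hgk : g + 1 ≤ 2 ^ k := Nat.le_pow_clog one_lt_two _
  have hpj : ∀ j, j < k → 2 ^ j ≤ g := by
    intro j hj
    by_contra h
    push_neg at h
    have h2 : g + 1 ≤ 2 ^ j := h
    have := (Nat.clog_le_iff_le_pow one_lt_two).mpr h2
    omega
  set σf : ℕ → ℕ := fun j => min (2 ^ j - 1) g with hσdef
  have hmono : Monotone σf := by
    intro a b hab
    exact min_le_min (Nat.sub_le_sub_right (Nat.pow_le_pow_right (by norm_num) hab) 1) le_rfl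
  have hσ0 : σf 0 = 0 := by simp [hσdef]
  have hσk : σf k = g := by
    have : g ≤ 2 ^ k - 1 := by omega
    simp [hσdef, min_eq_right this]
  have hσle : ∀ j, σf j ≤ g := fun j => min_le_right _ _
  have hσlt : ∀ j, j < k → σf j < σf (j + 1) := by
    intro j hj
    have h2 : 2 ^ j ≤ g := hpj j hj
    have h3 : (1:ℕ) ≤ 2 ^ j := Nat.one_le_two_pow
    have h4 : 2 ^ (j + 1) = 2 * 2 ^ j := by rw [pow_succ]; ring
    simp only [hσdef]
    omega
  have hstep : ∀ j, σf (j + 1) ≤ 2 * σf j + 1 := by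
    intro j
    have h3 : (1:ℕ) ≤ 2 ^ j := Nat.one_le_two_pow
    have h4 : 2 ^ (j + 1) = 2 * 2 ^ j := by rw [pow_succ]; ring
    simp only [hσdef]
    omega
  -- subset sums
  have hsubsum : ∀ j, j ≤ k → ∀ s, s ≤ σf j → ∃ T : Finset (Fin k),
      (∀ i ∈ T, i.val < j) ∧ ∑ i ∈ T, (σf (i.val + 1) - σf i.val) = s := by
    intro j
    induction j with
    | zero =>
      intro _ s hs
      rw [hσ0] at hs
      exact ⟨∅, by simp, by simp [Nat.le_zero.mp hs]⟩
    | succ j IH =>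
      intro hjk s hs
      have hj : j < k := hjk
      by_cases hsle : s ≤ σf j
      · obtain ⟨T, hT1, hT2⟩ := IH (le_of_lt hj) s hsle
        exact ⟨T, fun i hi => Nat.lt_succ_of_lt (hT1 i hi), hT2⟩
      · push_neg at hsle
        have hmo : σf j ≤ σf (j + 1) := hmono (Nat.le_succ j)
        have hst := hstep j
        obtain ⟨T, hT1, hT2⟩ := IH (le_of_lt hj) (s - (σf (j + 1) - σf j)) (by omega)
        have hnotmem : (⟨j, hj⟩ : Fin k) ∉ T := fun hmem => lt_irrefl j (hT1 _ hmem)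
        refine ⟨insert ⟨j, hj⟩ T, ?_, ?_⟩
        · intro i hi
          rcases Finset.mem_insert.mp hi with h | h
          · rw [h]; exact Nat.lt_succ_self j
          · exact Nat.lt_succ_of_lt (hT1 i h)
        · rw [Finset.sum_insert hnotmem, hT2]
          simp only [Fin.val_mk]
          omega
  -- telescoping bound
  have htel : ∀ jj, ∑ i ∈ Finset.range jj, (σf (i + 1) - σf i) = σf jj - σf 0 := by
    intro jj
    induction jj with
    | zero => simp
    | succ jj IH =>
      rw [Finset.sum_range_succ, IH]
      have h1 : σf jj ≤ σf (jj + 1) := hmono (Nat.le_succ jj)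
      have h2 : σf 0 ≤ σf jj := hmono (Nat.zero_le jj)
      omega
  have hsumall : ∀ T : Finset (Fin k), ∑ j ∈ T, (σf (j.val + 1) - σf j.val) ≤ g := by
    intro T
    calc ∑ j ∈ T, (σf (j.val + 1) - σf j.val)
        ≤ ∑ j : Fin k, (σf (j.val + 1) - σf j.val) :=
          Finset.sum_le_sum_of_subset (Finset.subset_univ T)
      _ = ∑ i ∈ Finset.range k, (σf (i + 1) - σf i) :=
          Fin.sum_univ_eq_sum_range (fun i => σf (i + 1) - σf i) k
      _ = σf k - σf 0 := htel k
      _ ≤ g := by rw [hσk, hσ0]; omega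
  -- blocks are inside Fin n
  have hσjn : ∀ j : Fin k, σf j.val < n := by
    intro j
    have := hσlt j.val j.isLt
    have := hσle (j.val + 1)
    omega
  have hσNn : ∀ j : Fin k, σf (j.val + 1) ≤ n := fun j => le_trans (hσle _) hgn
  -- the operators
  set bp : Fin k → Fin n → Prop :=
    fun j i => σf j.val < i.val ∧ i.val < σf (j.val + 1) with hbp
  set bj : Fin k → Fin n := fun j => ⟨σf j.val, hσjn j⟩ with hbj
  set QQ : Fin k → EuclideanSpace ℝ (Fin n) →ₗ[ℝ] EuclideanSpace ℝ (Fin n) :=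
    fun j => diagProj (bp j) with hQQ
  set aa : Fin k → EuclideanSpace ℝ (Fin n) :=
    fun j => (1/2 : ℝ) • EuclideanSpace.single (bj j) (1:ℝ) with haa
  set al : Fin k → ℝ := fun _ => 0 with hal
  have hsym : ∀ j x y, ⟪QQ j x, y⟫ = ⟪x, QQ j y⟫ := fun j => diagProj_symm (bp j)
  have hpsd : ∀ j x, (0:ℝ) ≤ ⟪QQ j x, x⟫ := fun j => diagProj_psd (bp j)
  have hinner_a : ∀ (j : Fin k) (x : EuclideanSpace ℝ (Fin n)),
      ⟪aa j, x⟫ = (1/2) * x (bj j) := by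
    intro j x
    rw [haa]
    simp only [real_inner_smul_left]
    rw [show ((1:ℝ)) = ((1:ℝ):ℝ) from rfl]
    rw [EuclideanSpace.inner_single_left]
    simp
  have hqf : ∀ (j : Fin k) (x : EuclideanSpace ℝ (Fin n)),
      qf (QQ j) (aa j) (al j) x = (∑ i, if bp j i then x i * x i else 0) + x (bj j) := by
    intro j x
    unfold qf
    rw [inner_diagProj_left, hinner_a]
    simp only [hal]
    ring
  refine ⟨Sset QQ aa al, Sset_convex hsym hpsd, ⟨QQ, aa, al, hpsd, hsym, rfl⟩, ?_⟩
  -- identification of the K spaces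
  have hK : ∀ j : Fin k, Kspace (QQ j) (aa j)
      = ZP (fun i : Fin n => σf j.val ≤ i.val ∧ i.val < σf (j.val + 1)) := by
    intro j
    ext v
    rw [mem_Kspace, mem_ZP]
    rw [hQQ]
    simp only []
    rw [diagProj_eq_zero_iff, hinner_a]
    constructor
    · rintro ⟨h1, h2⟩ i ⟨hi1, hi2⟩
      rcases Nat.eq_or_lt_of_le hi1 with heq | hlt
      · have hieq : i = bj j := Fin.ext heq.symm
        rw [hieq]
        linarith [h2]
      · exact h1 i ⟨hlt, hi2⟩
    · intro h
      refine ⟨fun i hi => h i ⟨le_of_lt hi.1, hi.2⟩, ?_⟩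
      have : v (bj j) = 0 := h (bj j) ⟨le_rfl, hσlt j.val j.isLt⟩
      rw [this]; ring
  -- identification of V spaces
  have hVx : ∀ x : EuclideanSpace ℝ (Fin n), Vspace QQ aa al x
      = ZP (fun i : Fin n => ∃ j, qf (QQ j) (aa j) (al j) x = 0 ∧
          σf j.val ≤ i.val ∧ i.val < σf (j.val + 1)) := by
    intro x
    ext v
    rw [mem_Vspace, mem_ZP]
    constructor
    · rintro h i ⟨j, hj, hi⟩
      have := h j hj
      rw [hK j] at this
      exact this i hi
    · intro h j hj
      rw [hK j]
      exact fun i hi => h i ⟨j, hj, hi⟩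
  have hVrank : ∀ x : EuclideanSpace ℝ (Fin n),
      Module.finrank ℝ (Vspace QQ aa al x)
        = n - ∑ j ∈ Finset.univ.filter
            (fun j => qf (QQ j) (aa j) (al j) x = 0), (σf (j.val + 1) - σf j.val) := by
    intro x
    rw [hVx, finrank_ZP]
    congr 1
    rw [← card_blocks σf hmono hσNn]
    congr 1
    apply Finset.filter_congr
    intro i _
    constructor
    · rintro ⟨j, hj, hi⟩
      exact ⟨j, Finset.mem_filter.mpr ⟨Finset.mem_univ _, hj⟩, hi⟩
    · rintro ⟨j, hj, hi⟩
      exact ⟨j, (Finset.mem_filter.mp hj).2, hi⟩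
  -- now compute the signature
  apply Set.eq_of_subset_of_subset
  · -- sig ⊆ Icc
    intro d hd
    obtain ⟨x, hxS, hxd⟩ := exists_point_of_sig hsym hpsd hd
    rw [hVrank x] at hxd
    have hb := hsumall (Finset.univ.filter
      (fun j => qf (QQ j) (aa j) (al j) x = 0))
    constructor
    · omega
    · omega
  · -- Icc ⊆ sig
    intro d hd
    obtain ⟨hd1, hd2⟩ := hd
    set s := n - d with hs
    have hsg : s ≤ σf k := by rw [hσk]; omega
    obtain ⟨T, _, hT2⟩ := hsubsum k le_rfl s hsg
    -- the witness point
    set x : EuclideanSpace ℝ (Fin n) :=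
      WithLp.toLp 2 (fun i : Fin n => if ∃ j : Fin k, j ∉ T ∧ i.val = σf j.val then (-1:ℝ) else 0) with hx
    have hσinj : ∀ j j' : Fin k, σf j.val = σf j'.val → j = j' := by
      intro j j' hjj
      by_contra hne
      have hvne : j.val ≠ j'.val := fun h => hne (Fin.ext h)
      rcases lt_or_gt_of_ne hvne with h | h
      · have h1 := hσlt j.val j.isLt
        have h2 : σf (j.val + 1) ≤ σf j'.val := hmono h
        omega
      · have h1 := hσlt j'.val j'.isLt
        have h2 : σf (j'.val + 1) ≤ σf j.val := hmono h
        omega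
    have hxapply : ∀ i : Fin n,
        x i = if ∃ j' : Fin k, j' ∉ T ∧ i.val = σf j'.val then (-1:ℝ) else 0 :=
      fun i => rfl
    have hxbj : ∀ j : Fin k, x (bj j) = if j ∈ T then 0 else -1 := by
      intro j
      by_cases hj : j ∈ T
      · have hnex : ¬ ∃ j' : Fin k, j' ∉ T ∧ (bj j).val = σf j'.val := by
          rintro ⟨j', hj', hjj⟩
          have hjj' : j' = j := hσinj j' j (by exact hjj.symm)
          rw [hjj'] at hj'
          exact hj' hj
        rw [hxapply, if_neg hnex, if_pos hj]
      · have hex : ∃ j' : Fin k, j' ∉ T ∧ (bj j).val = σf j'.val := ⟨j, hj, rfl⟩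
        rw [hxapply, if_pos hex, if_neg hj]
    have hxint : ∀ (j : Fin k) (i : Fin n), bp j i → x i = 0 := by
      intro j i hi
      rw [hbp] at hi
      have : ¬ ∃ j' : Fin k, j' ∉ T ∧ i.val = σf j'.val := by
        rintro ⟨j', _, hjj⟩
        -- σf j < i.val = σf j' < σf (j+1) impossible
        have h1 : σf j.val < σf j'.val := by omega
        have h2 : σf j'.val < σf (j.val + 1) := by omega
        have hjlt : j.val < j'.val := by
          by_contra hle
          push_neg at hle
          have := hmono hle
          omega
        have : σf (j.val + 1) ≤ σf j'.val := hmono hjlt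
        omega
      rw [hxapply, if_neg this]
    have hqfx : ∀ j : Fin k, qf (QQ j) (aa j) (al j) x = if j ∈ T then 0 else -1 := by
      intro j
      rw [hqf j x]
      have hzero : (∑ i, if bp j i then x i * x i else 0) = 0 := by
        refine Finset.sum_eq_zero fun i _ => ?_
        by_cases hi : bp j i
        · rw [if_pos hi, hxint j i hi, mul_zero]
        · rw [if_neg hi]
      rw [hzero, hxbj j, zero_add]
    have hxS : x ∈ Sset QQ aa al := by
      intro j
      rw [hqfx j]
      by_cases hj : j ∈ T <;> simp [hj]
    have hmem := mem_sig_of_mem hsym hpsd hxS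
    have hrank : Module.finrank ℝ (Vspace QQ aa al x) = d := by
      rw [hVrank x]
      have hfeq : Finset.univ.filter (fun j => qf (QQ j) (aa j) (al j) x = 0) = T := by
        apply Finset.ext
        intro j
        rw [Finset.mem_filter]
        constructor
        · rintro ⟨-, hj⟩
          rw [hqfx j] at hj
          by_contra hjT
          rw [if_neg hjT] at hj
          norm_num at hj
        · intro hj
          exact ⟨Finset.mem_univ _, by rw [hqfx j, if_pos hj]⟩
      rw [hfeq, hT2]
      omega
    rw [hrank] at hmem
    exact hmem

end Upper

theorem optimal_complete (m n : ℕ) (hmn : m < n) :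
    IsLeast {k : ℕ | ∃ (N : ℕ) (S : Set (EuclideanSpace ℝ (Fin N))),
        Convex ℝ S ∧ QuadRep S k ∧ faceDimSig S = Set.Icc m n}
      (Nat.clog 2 (n - m + 1)) := by
  constructor
  · obtain ⟨S, hconv, hrep, hsig⟩ := upper_exists m n hmn
    exact ⟨n, S, hconv, hrep, hsig⟩
  · rintro k' ⟨N, S, hconv, ⟨QQ, aa, al, hp, hs, hSeq⟩, hsig⟩
    have hS : S = Sset QQ aa al := hSeq
    rw [hS] at hconv hsig
    have := lower_bound_aux hmn hp hs hconv hsig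
    exact (Nat.clog_le_iff_le_pow one_lt_two).mpr this
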